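/- For every integer k ≥ 1, the functions f(x) = (2^k−1)x + 2^{k+1}x² and g(x) = (−2^k−1)x + 2^{k+1}x², both taken mod N = 2^{2k−1}, are mutually inverse: f(g(x)) ≡ x (mod N) and g(f(x)) ≡ x (mod N) for all x ∈ ℤ_N. -/
import Mathlib


/-- For k ≥ 1 and N = 2^{2k−1}, f(x) = (2^k−1)x + 2^{k+1}x² and
g(x) = (−2^k−1)x + 2^{k+1}x² are mutually inverse functions on ℤ_N. -/
theorem max_spread_qpp_inverse (k : ℕ) (hk : 1 ≤ k) :
    let N := 2 ^ (2 * k - 1)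
    let f : ZMod N → ZMod N := fun x => ((2 : ZMod N) ^ k - 1) * x + 2 ^ (k + 1) * x ^ 2
    let g : ZMod N → ZMod N := fun x => (-(2 : ZMod N) ^ k - 1) * x + 2 ^ (k + 1) * x ^ 2
    ∀ x : ZMod N, f (g x) = x ∧ g (f x) = x := by
  intro N f g x
  have h : (2 : ZMod N) ^ k * (2 : ZMod N) ^ k = 0 := by
    have hdvd : (2 ^ (2 * k - 1) : ℕ) ∣ 2 ^ (2 * k) := pow_dvd_pow 2 (Nat.sub_le _ _)
    have h0 : ((2 ^ (2 * k) : ℕ) : ZMod N) = 0 :=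
      (ZMod.natCast_eq_zero_iff _ _).mpr hdvd
    push_cast at h0
    rw [two_mul, pow_add] at h0
    exact h0
  set a := (2 : ZMod N) ^ k with ha
  constructor
  · show (a - 1) * ((-a - 1) * x + 2 ^ (k + 1) * x ^ 2) +
      2 ^ (k + 1) * ((-a - 1) * x + 2 ^ (k + 1) * x ^ 2) ^ 2 = x
    rw [pow_succ, ← ha]
    linear_combination (-x + (6 + 2 * a) * x ^ 2 - 8 * (a + 1) * x ^ 3 + 8 * a * x ^ 4) * h
  · show (-a - 1) * ((a - 1) * x + 2 ^ (k + 1) * x ^ 2) +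
      2 ^ (k + 1) * ((a - 1) * x + 2 ^ (k + 1) * x ^ 2) ^ 2 = x
    rw [pow_succ, ← ha]
    linear_combination (-x + (2 * a - 6) * x ^ 2 + 8 * (a - 1) * x ^ 3 + 8 * a * x ^ 4) * h
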